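/- Assume β_I(R)<∞ and let β̂ := sup_{y∈ℝ²} β(R,y) > 0 and κ := ∫_{ℝ²} β(R,y) f(y) dy. Then for all λ_p>0 and c̄>0, P₁(R,c̄,λ_p)·P₂(R,c̄) ≤ P_p(λ_p c̄ (1−e^{−c̄β̂})/(c̄β̂)) · [1 − (1−e^{−c̄β̂}) κ/β̂]. -/

import Mathlib

open MeasureTheory ProbabilityTheory Filter Real
open scoped ProbabilityTheory

local notation "E2" => EuclideanSpace ℝ (Fin 2)

/-- Chord inequality for the convex function `t ↦ exp (-(c*t))` on `[0, b]`. -/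
lemma chord_exp (c b t : ℝ) (hb : 0 < b) (ht0 : 0 ≤ t) (htb : t ≤ b) :
    Real.exp (-(c * t)) ≤ 1 - (1 - Real.exp (-(c * b))) * t / b := by
  have hs0 : 0 ≤ t / b := div_nonneg ht0 hb.le
  have hs1 : 0 ≤ 1 - t / b := by
    have : t / b ≤ 1 := (div_le_one hb).2 htb
    linarith
  have hkey := convexOn_exp.2 (Set.mem_univ (-(c * b))) (Set.mem_univ (0 : ℝ)) hs0 hs1
    (by ring : t / b + (1 - t / b) = 1)
  simp only [smul_eq_mul, Real.exp_zero, mul_zero, add_zero, mul_one] at hkey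
  have harg : t / b * -(c * b) = -(c * t) := by
    field_simp
  rw [harg] at hkey
  have heq : 1 - (1 - Real.exp (-(c * b))) * t / b
      = t / b * Real.exp (-(c * b)) + (1 - t / b) := by ring
  linarith

/-- Tighter upper bound on the success probability of a Neyman–Scott clustered
network under Rayleigh fading:
`P₁·P₂ ≤ P_p(λ_p c̄ (1-e^{-c̄β̂})/(c̄β̂)) · [1 - (1-e^{-c̄β̂}) κ/β̂]`. -/
theorem stmt_4
    (g f : E2 → ℝ) (T R lamp cbar : ℝ)
    (hT : 0 < T) (hR : 0 < R) (hlamp : 0 < lamp) (hcbar : 0 < cbar)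
    (hg_pos : ∀ x : E2, x ≠ 0 → 0 < g x)
    (hg_cont : ContinuousOn g {(0 : E2)}ᶜ)
    (hg_mono : ∀ x y : E2, x ≠ 0 → y ≠ 0 → ‖x‖ ≤ ‖y‖ → g y ≤ g x)
    (hg_int : ∀ ε : ℝ, 0 < ε → IntegrableOn g (Metric.ball (0 : E2) ε)ᶜ)
    (hf_meas : Measurable f) (hf_nonneg : ∀ x, 0 ≤ f x)
    (hf_prob : ∫ x, f x = 1)
    (hf_iso : ∀ x y : E2, ‖x‖ = ‖y‖ → f x = f y)
    (z : E2) (hz : z = EuclideanSpace.single (0 : Fin 2) R)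
    (β : E2 → ℝ)
    (hβ : ∀ y, β y = ∫ x, g (x - y - z) / (g z / T + g (x - y - z)) * f x)
    (βI : ℝ) (hβI : βI = ∫ u, g u / (g z / T + g u))
    (hβI_fin : Integrable fun u : E2 => g u / (g z / T + g u))
    (βhat : ℝ) (hβhat : βhat = ⨆ y : E2, β y) (hβhat_pos : 0 < βhat)
    (κ : ℝ) (hκ : κ = ∫ y, β y * f y)
    (P1 P2 : ℝ)
    (hP1 : P1 = Real.exp (-(lamp * ∫ y, (1 - Real.exp (-(cbar * β y))))))
    (hP2 : P2 = ∫ y, Real.exp (-(cbar * β y)) * f y) :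
    P1 * P2 ≤ Real.exp (-(lamp * cbar * (1 - Real.exp (-(cbar * βhat))) / (cbar * βhat) * βI)) *
      (1 - (1 - Real.exp (-(cbar * βhat))) * κ / βhat) := by
  set E : ℝ := Real.exp (-(cbar * βhat)) with hE
  set h : E2 → ℝ := fun u => g u / (g z / T + g u) with hh
  -- basic facts
  have hz_ne : z ≠ 0 := by
    rw [hz]
    intro hcontra
    have h0 := congrArg (fun v : E2 => v 0) hcontra
    simp [EuclideanSpace.single_apply] at h0
    exact hR.ne' h0
  have hgz_pos : 0 < g z / T := div_pos (hg_pos z hz_ne) hT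
  have hf_int : Integrable f := by
    by_contra hni
    rw [integral_undef hni] at hf_prob
    norm_num at hf_prob
  have hg_meas : Measurable g := measurable_of_continuousOn_compl_singleton 0 hg_cont
  have hh_meas : Measurable h := hg_meas.div (measurable_const.add hg_meas)
  have hh_nonneg : ∀ u : E2, u ≠ 0 → 0 ≤ h u := fun u hu =>
    div_nonneg (hg_pos u hu).le (add_nonneg hgz_pos.le (hg_pos u hu).le)
  have hh_le_one : ∀ u : E2, u ≠ 0 → h u ≤ 1 := fun u hu =>
    (div_le_one (add_pos hgz_pos (hg_pos u hu))).2 (le_add_of_nonneg_left hgz_pos.le)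
  -- a.e. the shifted point is nonzero
  have hae : ∀ y : E2, ∀ᵐ x : E2, x - y - z ≠ 0 := by
    intro y
    rw [ae_iff]
    have hset : {x : E2 | ¬ x - y - z ≠ 0} = {y + z} := by
      ext x
      simp [sub_sub, sub_eq_zero]
    rw [hset]
    exact measure_singleton _
  -- β is nonnegative and bounded by 1
  have hβ_nonneg : ∀ y, 0 ≤ β y := by
    intro y
    rw [hβ y]
    refine integral_nonneg_of_ae ?_
    filter_upwards [hae y] with x hx
    exact mul_nonneg (hh_nonneg _ hx) (hf_nonneg x)
  have hβ_le_one : ∀ y, β y ≤ 1 := by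
    intro y
    rw [hβ y]
    calc (∫ x, h (x - y - z) * f x) ≤ ∫ x, f x := by
          refine integral_mono_of_nonneg ?_ hf_int ?_
          · filter_upwards [hae y] with x hx
            exact mul_nonneg (hh_nonneg _ hx) (hf_nonneg x)
          · filter_upwards [hae y] with x hx
            calc h (x - y - z) * f x ≤ 1 * f x :=
                  mul_le_mul_of_nonneg_right (hh_le_one _ hx) (hf_nonneg x)
              _ = f x := one_mul _
      _ = 1 := hf_prob
  have hbdd : BddAbove (Set.range β) := ⟨1, by rintro _ ⟨y, rfl⟩; exact hβ_le_one y⟩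
  have hβ_le_βhat : ∀ y, β y ≤ βhat := by
    intro y
    rw [hβhat]
    exact le_ciSup hbdd y
  have hE_le_one : E ≤ 1 := by
    rw [hE]
    have : -(cbar * βhat) ≤ 0 := by nlinarith
    calc Real.exp (-(cbar * βhat)) ≤ Real.exp 0 := Real.exp_le_exp.2 this
      _ = 1 := Real.exp_zero
  have hE_nonneg : 0 ≤ 1 - E := by linarith
  -- chord inequalities
  have hchord : ∀ y, Real.exp (-(cbar * β y)) ≤ 1 - (1 - E) * β y / βhat := fun y =>
    chord_exp cbar βhat (β y) hβhat_pos (hβ_nonneg y) (hβ_le_βhat y)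
  --------------------------------------------------------------------
  -- Fubini: Integrable β and ∫ β = βI
  --------------------------------------------------------------------
  have hD1 : MeasurePreserving (fun p : E2 × E2 => (p.1, p.2 - p.1))
      ((volume : Measure E2).prod volume) (volume.prod volume) :=
    measurePreserving_prod_sub volume volume
  have hD2 : MeasurePreserving (fun p : E2 × E2 => (p.1, -p.2))
      ((volume : Measure E2).prod volume) (volume.prod volume) :=
    (MeasurePreserving.id volume).prod (Measure.measurePreserving_neg volume)
  have hD3 : MeasurePreserving (fun p : E2 × E2 => (p.1, p.2 - z))
      ((volume : Measure E2).prod volume) (volume.prod volume) :=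
    (MeasurePreserving.id volume).prod
      ⟨measurable_sub_const z, map_sub_right_eq_self volume z⟩
  have hD : MeasurePreserving (fun p : E2 × E2 => (p.1, p.1 - p.2 - z))
      ((volume : Measure E2).prod volume) (volume.prod volume) := by
    have := (hD3.comp hD2).comp hD1
    convert this using 1
    funext p
    simp [Function.comp, neg_sub]
  have hG_int : Integrable (fun q : E2 × E2 => f q.1 * h q.2)
      ((volume : Measure E2).prod volume) := hf_int.mul_prod hβI_fin
  have hG_aesm : AEStronglyMeasurable (fun q : E2 × E2 => f q.1 * h q.2)
      ((volume : Measure E2).prod volume) :=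
    ((hf_meas.comp measurable_fst).mul (hh_meas.comp measurable_snd)).aestronglyMeasurable
  have hF_int : Integrable (fun p : E2 × E2 => h (p.1 - p.2 - z) * f p.1)
      ((volume : Measure E2).prod volume) := by
    have := (hD.integrable_comp hG_aesm).2 hG_int
    refine this.congr ?_
    filter_upwards with p
    simp [Function.comp, mul_comm]
  have hβ_int : Integrable β := by
    have hmarg := hF_int.integral_prod_right
    refine hmarg.congr ?_
    filter_upwards with y
    rw [hβ y]
  have hβ_aesm : AEStronglyMeasurable β (volume : Measure E2) := hβ_int.aestronglyMeasurable
  have hIβ : (∫ y, β y) = βI := by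
    have hswap := integral_integral_swap
      (f := fun x y : E2 => h (x - y - z) * f x) (μ := (volume : Measure E2))
      (ν := (volume : Measure E2)) hF_int
    have hleft : (∫ y, β y) = ∫ y, ∫ x, h (x - y - z) * f x := by
      congr 1; funext y; exact hβ y
    rw [hleft, ← hswap]
    have hinner : ∀ x : E2, (∫ y, h (x - y - z) * f x) = βI * f x := by
      intro x
      rw [integral_mul_const]
      congr 1
      have : (fun y : E2 => h (x - y - z)) = fun y => h ((x - z) - y) := by
        funext y; rw [sub_right_comm]
      rw [this, integral_sub_left_eq_self h volume (x - z), hβI]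
    calc (∫ x, ∫ y, h (x - y - z) * f x) = ∫ x, βI * f x := by
          congr 1; funext x; exact hinner x
      _ = βI * ∫ x, f x := integral_const_mul βI f
      _ = βI := by rw [hf_prob, mul_one]
  --------------------------------------------------------------------
  -- bound on P2
  --------------------------------------------------------------------
  have hκ_int : Integrable (fun y => β y * f y) := by
    refine hf_int.mono (hβ_aesm.mul hf_meas.aestronglyMeasurable) ?_
    filter_upwards with y
    rw [Real.norm_eq_abs, Real.norm_eq_abs, abs_mul,
      abs_of_nonneg (hβ_nonneg y), abs_of_nonneg (hf_nonneg y)]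
    calc β y * f y ≤ 1 * f y := mul_le_mul_of_nonneg_right (hβ_le_one y) (hf_nonneg y)
      _ = f y := one_mul _
  have hP2B : P2 ≤ 1 - (1 - E) * κ / βhat := by
    rw [hP2]
    have hRHS_int : Integrable (fun y => f y - (1 - E) / βhat * (β y * f y)) :=
      hf_int.sub (hκ_int.const_mul _)
    have hmono : (∫ y, Real.exp (-(cbar * β y)) * f y)
        ≤ ∫ y, (f y - (1 - E) / βhat * (β y * f y)) := by
      refine integral_mono_of_nonneg ?_ hRHS_int ?_
      · filter_upwards with y
        exact mul_nonneg (Real.exp_nonneg _) (hf_nonneg y)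
      · filter_upwards with y
        have h1 := hchord y
        have h2 : Real.exp (-(cbar * β y)) * f y
            ≤ (1 - (1 - E) * β y / βhat) * f y :=
          mul_le_mul_of_nonneg_right h1 (hf_nonneg y)
        calc Real.exp (-(cbar * β y)) * f y ≤ (1 - (1 - E) * β y / βhat) * f y := h2
          _ = f y - (1 - E) / βhat * (β y * f y) := by ring
    have hcalc : (∫ y, (f y - (1 - E) / βhat * (β y * f y)))
        = 1 - (1 - E) * κ / βhat := by
      rw [integral_sub hf_int (hκ_int.const_mul _), integral_const_mul, hf_prob, ← hκ]
      ring
    linarith [hcalc ▸ hmono]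
  --------------------------------------------------------------------
  -- bound on P1
  --------------------------------------------------------------------
  have hI_int : Integrable (fun y => 1 - Real.exp (-(cbar * β y))) := by
    refine Integrable.mono' (hβ_int.const_mul cbar) ?_ ?_
    · have hc : Continuous (fun t : ℝ => 1 - Real.exp (-(cbar * t))) :=
        continuous_const.sub (Real.continuous_exp.comp (continuous_const.mul continuous_id).neg)
      exact hc.comp_aestronglyMeasurable hβ_aesm
    · filter_upwards with y
      have ht0 : 0 ≤ cbar * β y := mul_nonneg hcbar.le (hβ_nonneg y)
      have hle : Real.exp (-(cbar * β y)) ≤ 1 := by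
        calc Real.exp (-(cbar * β y)) ≤ Real.exp 0 := Real.exp_le_exp.2 (by linarith)
          _ = 1 := Real.exp_zero
      have hge : 1 - cbar * β y ≤ Real.exp (-(cbar * β y)) := by
        have := Real.add_one_le_exp (-(cbar * β y))
        linarith
      rw [Real.norm_eq_abs, abs_of_nonneg (by linarith)]
      linarith
  have hI_ge : (1 - E) / βhat * βI ≤ ∫ y, (1 - Real.exp (-(cbar * β y))) := by
    have hmono : (∫ y, (1 - E) / βhat * β y) ≤ ∫ y, (1 - Real.exp (-(cbar * β y))) := by
      refine integral_mono_of_nonneg ?_ hI_int ?_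
      · filter_upwards with y
        exact mul_nonneg (div_nonneg hE_nonneg hβhat_pos.le) (hβ_nonneg y)
      · filter_upwards with y
        have h1 := hchord y
        have heq : (1 - E) * β y / βhat = (1 - E) / βhat * β y := by ring
        linarith [heq ▸ h1]
    calc (1 - E) / βhat * βI = ∫ y, (1 - E) / βhat * β y := by
          rw [integral_const_mul, hIβ]
      _ ≤ _ := hmono
  have hP1A : P1 ≤ Real.exp (-(lamp * cbar * (1 - E) / (cbar * βhat) * βI)) := by
    rw [hP1]
    refine Real.exp_le_exp.2 ?_
    have hexp_eq : lamp * cbar * (1 - E) / (cbar * βhat) * βI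
        = lamp * ((1 - E) / βhat * βI) := by
      field_simp
    rw [hexp_eq, neg_le_neg_iff]
    exact mul_le_mul_of_nonneg_left hI_ge hlamp.le
  --------------------------------------------------------------------
  -- combine
  --------------------------------------------------------------------
  have hP2_nonneg : 0 ≤ P2 := by
    rw [hP2]
    exact integral_nonneg fun y => mul_nonneg (Real.exp_nonneg _) (hf_nonneg y)
  exact mul_le_mul hP1A hP2B hP2_nonneg (Real.exp_nonneg _)
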